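/- Let r ≥ 1 be an integer and h ∈ GL_n(F). The following are equivalent: (i) h ∈ GL_n(𝒪), all entries of t_n^{−r}·h·t_n^{r} lie in 𝒪, and m^{−1}·diag(h,1)·m ∈ K_{n+1}^{(−r)}; (ii) h ∈ GL_n(𝒪), all entries of t_n^{−r}·h·t_n^{r} lie in 𝒪, and m^{−1}·diag(h,1)·m ∈ K_{n+1}^{[−r]}; (iii) v(h_{ij}) ≥ r·|i−j| for all 1 ≤ i, j ≤ n, and the i-th row sum Σ_{j=1}^{n} h_{ij} lies in 1 + ϖ^{i·r}𝒪 for all 1 ≤ i ≤ n. In particular, K_H^{(r)} = {h ∈ GL_n(F) : v(h_{ij}) ≥ r·|i−j| for all i, j, and Σ_{j=1}^{n} h_{ij} ∈ 1 + ϖ^{i·r}𝒪 for all i}. -/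

import Mathlib

open Matrix

noncomputable section

/-- `v` is a surjective discrete (additive) valuation on the field `F` with uniformizer `ϖ`,
with the convention `v 0 = ⊤`. -/
def IsDVal {F : Type*} [Field F] (v : F → WithTop ℤ) (ϖ : F) : Prop :=
  (∀ x : F, v x = ⊤ ↔ x = 0) ∧
  (∀ x y : F, v (x * y) = v x + v y) ∧
  (∀ x y : F, min (v x) (v y) ≤ v (x + y)) ∧
  (∀ k : ℤ, ∃ x : F, v x = (k : WithTop ℤ)) ∧
  v ϖ = (1 : WithTop ℤ)

/-- `tMat ϖ ν r` is the integer power `t_ν^r` of the matrix `t_ν = diag(ϖ^{ν-1}, …, ϖ, 1)`. -/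
def tMat {F : Type*} [Field F] (ϖ : F) (ν : ℕ) (r : ℤ) : Matrix (Fin ν) (Fin ν) F :=
  Matrix.diagonal fun i => ϖ ^ (r * ((ν : ℤ) - 1 - ((i : ℕ) : ℤ)))

/-- The antidiagonal permutation matrix `w_ν` ((1-based) entries `1` iff `i + j = ν + 1`). -/
def wMat (F : Type*) [Field F] (ν : ℕ) : Matrix (Fin ν) (Fin ν) F :=
  Matrix.of fun i j => if (i : ℕ) + (j : ℕ) + 1 = ν then 1 else 0

/-- `GL_ν(𝒪)`: integral matrices with an integral two-sided inverse. -/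
def GLO {F : Type*} [Field F] (v : F → WithTop ℤ) (ν : ℕ) : Set (Matrix (Fin ν) (Fin ν) F) :=
  {g | (∀ i j, 0 ≤ v (g i j)) ∧
    ∃ g' : Matrix (Fin ν) (Fin ν) F, (∀ i j, 0 ≤ v (g' i j)) ∧ g * g' = 1 ∧ g' * g = 1}

/-- `N°_ν`: integral upper-triangular unipotent matrices. -/
def NO {F : Type*} [Field F] (v : F → WithTop ℤ) (ν : ℕ) : Set (Matrix (Fin ν) (Fin ν) F) :=
  {g | (∀ i j, 0 ≤ v (g i j)) ∧ (∀ i, g i i = 1) ∧ ∀ i j : Fin ν, j < i → g i j = 0}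

/-- `N_ν(F)`: all upper-triangular unipotent matrices. -/
def Nfull (F : Type*) [Field F] (ν : ℕ) : Set (Matrix (Fin ν) (Fin ν) F) :=
  {g | (∀ i, g i i = 1) ∧ ∀ i j : Fin ν, j < i → g i j = 0}

/-- The standard Iwahori subgroup `Iw_ν`. -/
def Iw {F : Type*} [Field F] (v : F → WithTop ℤ) (ν : ℕ) : Set (Matrix (Fin ν) (Fin ν) F) :=
  {g | g ∈ GLO v ν ∧ ∀ i j : Fin ν, j < i → (1 : WithTop ℤ) ≤ v (g i j)}

/-- `K_ν^{(r)} = GL_ν(𝒪) ∩ t_ν^{-r}·GL_ν(𝒪)·t_ν^{r}` (for any `r : ℤ`). -/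
def Kpar {F : Type*} [Field F] (v : F → WithTop ℤ) (ϖ : F) (ν : ℕ) (r : ℤ) :
    Set (Matrix (Fin ν) (Fin ν) F) :=
  {g | g ∈ GLO v ν ∧ tMat ϖ ν r * g * tMat ϖ ν (-r) ∈ GLO v ν}

/-- `K_ν^{⟨r⟩}`. -/
def KparAng {F : Type*} [Field F] (v : F → WithTop ℤ) (ϖ : F) (ν : ℕ) (r : ℤ) :
    Set (Matrix (Fin ν) (Fin ν) F) :=
  {g | g ∈ Kpar v ϖ ν r ∧ ∀ i, ((|r| - 1 : ℤ) : WithTop ℤ) ≤ v (g i i - 1)}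

/-- `K_ν^{[r]}`. -/
def KparSq {F : Type*} [Field F] (v : F → WithTop ℤ) (ϖ : F) (ν : ℕ) (r : ℤ) :
    Set (Matrix (Fin ν) (Fin ν) F) :=
  {g | g ∈ Kpar v ϖ ν r ∧ ∀ i, ((|r| : ℤ) : WithTop ℤ) ≤ v (g i i - 1)}

/-- A subset of a monoid is a subgroup. -/
def IsSubgrp {M : Type*} [Monoid M] (S : Set M) : Prop :=
  (1 : M) ∈ S ∧ (∀ a ∈ S, ∀ b ∈ S, a * b ∈ S) ∧ ∀ a ∈ S, ∃ b ∈ S, a * b = 1 ∧ b * a = 1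

/-- A standard deeper Iwahori subgroup: a subgroup `K ⊆ Iw_ν` with `K ∩ N_ν(F) = N°_ν`. -/
def IsStdDeeperIwahori {F : Type*} [Field F] (v : F → WithTop ℤ) (ν : ℕ)
    (K : Set (Matrix (Fin ν) (Fin ν) F)) : Prop :=
  IsSubgrp K ∧ K ⊆ Iw v ν ∧ K ∩ Nfull F ν = NO v ν

/-- The all-ones column vector of length `n`. -/
def uCol (F : Type*) [Field F] (n : ℕ) : Matrix (Fin n) (Fin 1) F :=
  Matrix.of fun _ _ => 1

/-- The twisting matrix `m = [[w_n, u],[0,1]]`. -/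
def mMat (F : Type*) [Field F] (n : ℕ) : Matrix (Fin (n + 1)) (Fin (n + 1)) F :=
  Matrix.reindex finSumFinEquiv finSumFinEquiv
    (Matrix.fromBlocks (wMat F n) (uCol F n) 0 (1 : Matrix (Fin 1) (Fin 1) F))

/-- Block-diagonal embedding `h ↦ diag(h, 1)`. -/
def dg1 {F : Type*} [Field F] {n : ℕ} (h : Matrix (Fin n) (Fin n) F) :
    Matrix (Fin (n + 1)) (Fin (n + 1)) F :=
  Matrix.reindex finSumFinEquiv finSumFinEquiv
    (Matrix.fromBlocks h 0 0 (1 : Matrix (Fin 1) (Fin 1) F))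

/-- The subgroup `K_H^{(r)} ⊆ GL_n(𝒪)`. -/
def KH {F : Type*} [Field F] (v : F → WithTop ℤ) (ϖ : F) (n : ℕ) (r : ℤ) :
    Set (Matrix (Fin n) (Fin n) F) :=
  {h | h ∈ GLO v n ∧ (∀ i j, 0 ≤ v ((tMat ϖ n (-r) * h * tMat ϖ n r) i j)) ∧
    (mMat F n)⁻¹ * dg1 h * mMat F n ∈ Kpar v ϖ (n + 1) (-r)}

/-- The double-coset set `K₁ · X₀ · K₂`. -/
def KXK {F : Type*} [Field F] {p q : ℕ} (K1 : Set (Matrix (Fin p) (Fin p) F))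
    (X0 : Matrix (Fin p) (Fin q) F) (K2 : Set (Matrix (Fin q) (Fin q) F)) :
    Set (Matrix (Fin p) (Fin q) F) :=
  {X | ∃ k ∈ K1, ∃ k' ∈ K2, X = k * X0 * k'}

/-- The antidiagonal rectangular matrix `X°` with `X°_{n+2-i, i} = ϖ^{λ_i}` (1-based indices)
and all other entries `0`. -/
def Xanti {F : Type*} [Field F] (ϖ : F) (n : ℕ) (lam : Fin n → ℤ) :
    Matrix (Fin (n + 1)) (Fin n) F :=
  Matrix.of fun r j => if (r : ℕ) + (j : ℕ) = n then ϖ ^ (lam j) else 0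

/-- `diag(ϖ^{λ_1}, …, ϖ^{λ_ν}) · w_ν`. -/
def Xdw {F : Type*} [Field F] (ϖ : F) (ν : ℕ) (lam : Fin ν → ℤ) : Matrix (Fin ν) (Fin ν) F :=
  Matrix.diagonal (fun i => ϖ ^ (lam i)) * wMat F ν

/-- The rectangular matrix `e_{n+1,n}` with upper `n×n` block the identity and zero last row. -/
def ePad (F : Type*) [Field F] (n : ℕ) : Matrix (Fin (n + 1)) (Fin n) F :=
  Matrix.of fun i j => if (i : ℕ) = (j : ℕ) then 1 else 0

/-- `λ_1 + ⋯ + λ_r`. -/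
def minorSum {n : ℕ} (lam : Fin n → ℤ) (r : ℕ) (hrn : r ≤ n) : ℤ :=
  ∑ i : Fin r, lam (Fin.castLE hrn i)

/-- Row indices of the Southwest-principal `r×r` minor: the last `r` rows. -/
def swRow (n r : ℕ) (hrn : r ≤ n) (i : Fin r) : Fin (n + 1) :=
  ⟨n + 1 - r + (i : ℕ), by have := i.isLt; omega⟩

/-- The Minor Condition (relative to fixed integers `λ_1 < ⋯ < λ_n`). -/
def MinorCond {F : Type*} [Field F] (v : F → WithTop ℤ) {n : ℕ} (lam : Fin n → ℤ)
    (X : Matrix (Fin (n + 1)) (Fin n) F) : Prop :=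
  ∀ r : ℕ, 1 ≤ r → ∀ hrn : r ≤ n,
    (∀ (f : Fin r → Fin (n + 1)) (g : Fin r → Fin n), StrictMono f → StrictMono g →
      ((minorSum lam r hrn : ℤ) : WithTop ℤ) ≤ v ((X.submatrix f g).det)) ∧
    v ((X.submatrix (swRow n r hrn) (Fin.castLE hrn)).det) = ((minorSum lam r hrn : ℤ) : WithTop ℤ)

/-- The Weak Minor Condition: Minor Condition restricted to anchored minors. -/
def WeakMinorCond {F : Type*} [Field F] (v : F → WithTop ℤ) {n : ℕ} (lam : Fin n → ℤ)
    (X : Matrix (Fin (n + 1)) (Fin n) F) : Prop :=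
  ∀ r : ℕ, 1 ≤ r → ∀ hrn : r ≤ n,
    (∀ (f : Fin r → Fin (n + 1)) (g : Fin r → Fin n), StrictMono f → StrictMono g →
      Fin.last n ∈ Set.range f →
      ((minorSum lam r hrn : ℤ) : WithTop ℤ) ≤ v ((X.submatrix f g).det)) ∧
    v ((X.submatrix (swRow n r hrn) (Fin.castLE hrn)).det) = ((minorSum lam r hrn : ℤ) : WithTop ℤ)

/-- Condition `Z(i)`: `X_{n+2-i', j} = 0` for all `1 ≤ i' ≤ i` and `i' < j ≤ n` (1-based). -/
def CondZ {F : Type*} [Field F] {n : ℕ} (X : Matrix (Fin (n + 1)) (Fin n) F) (i : ℕ) : Prop :=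
  ∀ i' j : ℕ, (h1 : 1 ≤ i') → (h2 : i' ≤ i) → (h3 : i' < j) → (h4 : j ≤ n) →
    X ⟨n + 1 - i', by omega⟩ ⟨j - 1, by omega⟩ = 0

/-- Condition `Z'(j)`: `X_{n+2-i, j'} = 0` for all `j + 1 ≤ j' < i ≤ n + 1` (1-based). -/
def CondZpr {F : Type*} [Field F] {n : ℕ} (X : Matrix (Fin (n + 1)) (Fin n) F) (j : ℕ) : Prop :=
  ∀ j' i : ℕ, (h1 : j + 1 ≤ j') → (h2 : j' < i) → (h3 : i ≤ n + 1) →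
    X ⟨n + 1 - i, by omega⟩ ⟨j' - 1, by omega⟩ = 0

/-- `h` is `s`-small. -/
def SSmall {F : Type*} [Field F] (v : F → WithTop ℤ) {n : ℕ} (s : ℤ)
    (h : Matrix (Fin n) (Fin n) F) : Prop :=
  (∀ i, v (h i i) = 0) ∧
  ∀ i j : Fin n, ((|((j : ℕ) : ℤ) - ((i : ℕ) : ℤ)| * s : ℤ) : WithTop ℤ) ≤ v (h i j)

/-- Block form `[[α, 0], [*, *]]` with `α` of size `i × i` lower triangular with diagonal
entries of valuation `0`. -/
def BlockLowUpTo {F : Type*} [Field F] (v : F → WithTop ℤ) {n : ℕ} (i : ℕ)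
    (h : Matrix (Fin n) (Fin n) F) : Prop :=
  (∀ a : Fin n, (a : ℕ) < i → v (h a a) = 0) ∧
  ∀ a b : Fin n, (a : ℕ) < i → (a : ℕ) < (b : ℕ) → h a b = 0

/-- `h` is upper-`s`-small up to row `i`. -/
def UpperSmallUpTo {F : Type*} [Field F] (v : F → WithTop ℤ) {n : ℕ} (s : ℤ) (i : ℕ)
    (h : Matrix (Fin n) (Fin n) F) : Prop :=
  ∃ hm hp : Matrix (Fin n) (Fin n) F, BlockLowUpTo v i hm ∧ SSmall v s hp ∧ h = hm * hp

/-- `h` is extremely `s`-small. -/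
def ExtrSmall {F : Type*} [Field F] (v : F → WithTop ℤ) {n : ℕ} (s : ℤ)
    (h : Matrix (Fin n) (Fin n) F) : Prop :=
  SSmall v s h ∧ Matrix.mulVec (wMat F n * h - 1) (fun _ => (1 : F)) = 0

/-- `h` is lower triangular with diagonal entries of valuation `0`. -/
def LowerUnitTri {F : Type*} [Field F] (v : F → WithTop ℤ) {n : ℕ}
    (h : Matrix (Fin n) (Fin n) F) : Prop :=
  (∀ a : Fin n, v (h a a) = 0) ∧ ∀ a b : Fin n, a < b → h a b = 0

/-- `h` is lower-`s`-small from column `j` (1-based `j`). -/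
def LowerSmallFrom {F : Type*} [Field F] (v : F → WithTop ℤ) {n : ℕ} (s : ℤ) (j : ℕ)
    (h : Matrix (Fin n) (Fin n) F) : Prop :=
  ∀ a b : Fin n, j ≤ (b : ℕ) + 1 → (b : ℕ) < (a : ℕ) →
    (((((a : ℕ) : ℤ) - ((b : ℕ) : ℤ)) * s : ℤ) : WithTop ℤ) ≤ v (h a b)

/-- Block form `[[α₋, 0], [*, 1]]` with `α₋` of size `(j-1) × (j-1)` lower triangular with
diagonal entries of valuation `0`, and lower-right identity block (1-based `j`). -/
def BlockLowFrom {F : Type*} [Field F] (v : F → WithTop ℤ) {n : ℕ} (j : ℕ)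
    (h : Matrix (Fin n) (Fin n) F) : Prop :=
  (∀ a : Fin n, (a : ℕ) < j - 1 → v (h a a) = 0) ∧
  (∀ a b : Fin n, (a : ℕ) < j - 1 → (a : ℕ) < (b : ℕ) → h a b = 0) ∧
  ∀ a b : Fin n, j - 1 ≤ (a : ℕ) → j - 1 ≤ (b : ℕ) → h a b = if a = b then 1 else 0

/-- The action `X ._s h := diag(t_n^{-s} h^{-w} t_n^{s}, 1) · X · (t_n^{-s} h t_n^{s})`. -/
def actS {F : Type*} [Field F] (ϖ : F) {n : ℕ} (s : ℤ) (X : Matrix (Fin (n + 1)) (Fin n) F)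
    (h : Matrix (Fin n) (Fin n) F) : Matrix (Fin (n + 1)) (Fin n) F :=
  dg1 (tMat ϖ n (-s) * (wMat F n * h⁻¹ * (wMat F n)⁻¹) * tMat ϖ n s) * X *
    (tMat ϖ n (-s) * h * tMat ϖ n s)

/-- The residue field `𝒪/(ϖ)` has cardinality `q`. -/
def ResidueCard {F : Type*} [Field F] (v : F → WithTop ℤ) (q : ℕ) : Prop :=
  ∃ R : Finset F, R.card = q ∧ (∀ x ∈ R, 0 ≤ v x) ∧
    ∀ x : F, 0 ≤ v x → ∃! y, y ∈ R ∧ (1 : WithTop ℤ) ≤ v (x - y)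

/-- `H` has index `k` in `G`: there is a transversal of cardinality `k`. -/
def IndexEq {M : Type*} [Monoid M] (H G : Set M) (k : ℕ) : Prop :=
  ∃ T : Finset M, T.card = k ∧ ↑T ⊆ G ∧ ∀ g ∈ G, ∃! t, t ∈ T ∧ ∃ h ∈ H, g = h * t

def cExp (ν : ℕ) : ℕ := (ν - 1) * ν * (ν + 1) / 6

def dExp (n : ℕ) : ℕ := n * (n + 1) * (2 * n + 1) / 6

/-- The block matrix `B = [[1_n, u],[0,1]]`. -/
def BMat (F : Type*) [Field F] (n : ℕ) : Matrix (Fin (n + 1)) (Fin (n + 1)) F :=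
  Matrix.reindex finSumFinEquiv finSumFinEquiv
    (Matrix.fromBlocks (1 : Matrix (Fin n) (Fin n) F) (uCol F n) 0 (1 : Matrix (Fin 1) (Fin 1) F))

/-- The group `G = GL_n(F) × GL_{n+1}(F)` (as a matrix pair monoid). -/
abbrev GPair (F : Type*) [Field F] (n : ℕ) :=
  Matrix (Fin n) (Fin n) F × Matrix (Fin (n + 1)) (Fin (n + 1)) F

def tPair {F : Type*} [Field F] (ϖ : F) (n : ℕ) : GPair F n :=
  (tMat ϖ n 1, tMat ϖ (n + 1) 1)

def tPairInv {F : Type*} [Field F] (ϖ : F) (n : ℕ) : GPair F n :=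
  (tMat ϖ n (-1), tMat ϖ (n + 1) (-1))

/-- `m_s = (t_n^s, m·t_{n+1}^s)`. -/
def mPair {F : Type*} [Field F] (ϖ : F) (n : ℕ) (s : ℤ) : GPair F n :=
  (tMat ϖ n s, mMat F n * tMat ϖ (n + 1) s)

/-- `ι(h) = (h, diag(h,1))`. -/
def iotaPair {F : Type*} [Field F] {n : ℕ} (h : Matrix (Fin n) (Fin n) F) : GPair F n :=
  (h, dg1 h)

def NOPair {F : Type*} [Field F] (v : F → WithTop ℤ) (n : ℕ) : Set (GPair F n) :=
  {p | p.1 ∈ NO v n ∧ p.2 ∈ NO v (n + 1)}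

def KAngPair {F : Type*} [Field F] (v : F → WithTop ℤ) (ϖ : F) (n : ℕ) (r : ℤ) :
    Set (GPair F n) :=
  {p | p.1 ∈ KparAng v ϖ n r ∧ p.2 ∈ KparAng v ϖ (n + 1) r}

/-- The left coset `g · K`. -/
def lCoset {M : Type*} [Mul M] (g : M) (K : Set M) : Set M := (g * ·) '' K

/-- The explicit description of `K_H^{(r)}` from Remark 5.8 / equation (5.5). -/
def KHexplicit {F : Type*} [Field F] (v : F → WithTop ℤ) (ϖ : F) (n : ℕ) (r : ℤ) :
    Set (Matrix (Fin n) (Fin n) F) :=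
  {h | (∀ a b : Fin n, ((r * |((a : ℕ) : ℤ) - ((b : ℕ) : ℤ)| : ℤ) : WithTop ℤ) ≤ v (h a b)) ∧
    ∀ a : Fin n, (((((a : ℕ) : ℤ) + 1) * r : ℤ) : WithTop ℤ) ≤ v ((∑ b, h a b) - 1)}

section Val
variable {F : Type*} [Field F] {v : F → WithTop ℤ} {ϖ : F} (hv : IsDVal v ϖ)
include hv


lemma v_zero : v 0 = ⊤ := (hv.1 0).mpr rfl

lemma v_ne_top {x : F} (hx : x ≠ 0) : v x ≠ ⊤ := fun h => hx ((hv.1 x).mp h)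

lemma v_one : v (1 : F) = 0 := by
  have h := hv.2.1 1 1
  rw [mul_one] at h
  obtain ⟨a, ha⟩ := WithTop.ne_top_iff_exists.mp (v_ne_top hv (one_ne_zero : (1:F) ≠ 0))
  rw [← ha] at h ⊢
  have : a = a + a := by exact_mod_cast h
  have : a = 0 := by omega
  simp [this]

lemma v_neg (x : F) : v (-x) = v x := by
  have hm1 : v (-1 : F) = 0 := by
    have h := hv.2.1 (-1 : F) (-1)
    rw [neg_mul_neg, one_mul, v_one hv] at h
    obtain ⟨a, ha⟩ := WithTop.ne_top_iff_exists.mp (v_ne_top hv (neg_ne_zero.mpr (one_ne_zero : (1:F) ≠ 0)))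
    rw [← ha] at h ⊢
    have : a + a = (0 : ℤ) := by exact_mod_cast h.symm
    have : a = 0 := by omega
    simp [this]
  calc v (-x) = v ((-1) * x) := by ring_nf
    _ = v (-1 : F) + v x := hv.2.1 _ _
    _ = v x := by rw [hm1, zero_add]

lemma v_sub_ge (x y : F) : min (v x) (v y) ≤ v (x - y) := by
  rw [sub_eq_add_neg]
  have := hv.2.2.1 x (-y)
  rwa [v_neg hv] at this

lemma v_pi_ne : ϖ ≠ 0 := by
  intro h
  have := hv.2.2.2.2
  rw [h, (hv.1 0).mpr rfl] at this
  exact (by simp : (⊤ : WithTop ℤ) ≠ (1:ℤ)) this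

lemma v_zpow (k : ℤ) : v (ϖ ^ k) = (k : WithTop ℤ) := by
  have hnat : ∀ m : ℕ, v (ϖ ^ m) = ((m : ℤ) : WithTop ℤ) := by
    intro m
    induction m with
    | zero => simpa using v_one hv
    | succ m ih =>
      rw [pow_succ, hv.2.1, ih, hv.2.2.2.2]
      push_cast
      rfl
  rcases k with m | m
  · rw [Int.ofNat_eq_coe, zpow_natCast]; exact hnat m
  · have h1 : ϖ ^ (Int.negSucc m) * ϖ ^ ((m+1 : ℕ) : ℤ) = 1 := by
      rw [← zpow_add₀ (v_pi_ne hv)]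
      norm_num [Int.negSucc_eq]
    have h2 := hv.2.1 (ϖ ^ (Int.negSucc m)) (ϖ ^ ((m+1:ℕ) : ℤ))
    rw [h1, v_one hv, zpow_natCast, hnat (m+1)] at h2
    obtain ⟨a, ha⟩ := WithTop.ne_top_iff_exists.mp (v_ne_top hv (zpow_ne_zero _ (v_pi_ne hv) : ϖ ^ (Int.negSucc m) ≠ 0))
    rw [← ha] at h2 ⊢
    have h3 : a + ((m:ℤ)+1) = 0 := by exact_mod_cast h2.symm
    have ha2 : a = Int.negSucc m := by rw [Int.negSucc_eq]; omega
    rw [ha2]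

lemma v_sum_ge {ι : Type*} (s : Finset ι) (f : ι → F) (c : WithTop ℤ)
    (h : ∀ i ∈ s, c ≤ v (f i)) : c ≤ v (∑ i ∈ s, f i) := by
  classical
  induction s using Finset.induction with
  | empty => simp [v_zero hv]
  | insert a s' hni ih =>
    rw [Finset.sum_insert hni]
    refine le_trans ?_ (hv.2.2.1 _ _)
    exact le_min (h a (Finset.mem_insert_self a s')) (ih fun i hi => h i (Finset.mem_insert_of_mem hi))

lemma v_prod_ge {ι : Type*} (s : Finset ι) (f : ι → F)
    (h : ∀ i ∈ s, 0 ≤ v (f i)) : 0 ≤ v (∏ i ∈ s, f i) := by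
  classical
  induction s using Finset.induction with
  | empty => simp [v_one hv]
  | insert a s' hni ih =>
    rw [Finset.prod_insert hni, hv.2.1]
    exact add_nonneg (h a (Finset.mem_insert_self a s')) (ih fun i hi => h i (Finset.mem_insert_of_mem hi))

lemma v_one_add {d : F} (hd : 1 ≤ v d) : v (1 + d) = 0 := by
  have h1 : (0 : WithTop ℤ) ≤ v (1 + d) := by
    have := hv.2.2.1 1 d
    rw [v_one hv] at this
    refine le_trans ?_ this
    simp only [le_min_iff, le_refl, true_and]
    exact le_trans (by exact_mod_cast (by omega : (0:ℤ) ≤ 1)) hd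
  have h2 : v (1 + d) ≤ 0 := by
    by_contra hc
    push_neg at hc
    have := v_sub_ge hv (1 + d) d
    rw [add_sub_cancel_right, v_one hv] at this
    have hlt : (0 : WithTop ℤ) < min (v (1+d)) (v d) :=
      lt_min hc (lt_of_lt_of_le (by exact_mod_cast (by omega : (0:ℤ) < 1)) hd)
    exact absurd (lt_of_lt_of_le hlt this) (lt_irrefl 0)
  exact le_antisymm h2 h1



lemma v_intunits_smul (u : ℤˣ) (x : F) : v (u • x) = v x := by
  rcases Int.units_eq_one_or u with h | h <;> rw [h] <;> simp [Units.smul_def, v_neg hv]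

omit [Field F] hv in
lemma perm_exists_lt {ν : ℕ} {σ : Equiv.Perm (Fin ν)} (hσ : σ ≠ 1) : ∃ a, σ a < a := by
  classical
  set s := Finset.univ.filter (fun x : Fin ν => σ x ≠ x) with hs_def
  have hs : s.Nonempty := by
    by_contra hempty
    apply hσ
    refine Equiv.ext fun x => ?_
    simp only [Equiv.Perm.coe_one, id_eq]
    by_contra hx
    exact hempty ⟨x, Finset.mem_filter.mpr ⟨Finset.mem_univ x, hx⟩⟩
  set a := s.max' hs with ha_def
  have ha : σ a ≠ a := (Finset.mem_filter.mp (s.max'_mem hs)).2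
  rcases ha.lt_or_gt with h | h
  · exact ⟨a, h⟩
  · exfalso
    have hmem : σ a ∉ s := fun hm => absurd (s.le_max' _ hm) (not_le.mpr h)
    have : σ (σ a) = σ a := by
      by_contra hne
      exact hmem (Finset.mem_filter.mpr ⟨Finset.mem_univ _, hne⟩)
    exact ha (σ.injective this)

lemma v_det_ge0 {ν : ℕ} {X : Matrix (Fin ν) (Fin ν) F} (hX : ∀ i j, 0 ≤ v (X i j)) :
    0 ≤ v X.det := by
  rw [Matrix.det_apply]
  refine v_sum_ge hv _ _ _ (fun σ _ => ?_)
  rw [v_intunits_smul hv]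
  exact v_prod_ge hv _ _ (fun i _ => hX _ _)

lemma v_prod_sub_one {ι : Type*} (s : Finset ι) (f : ι → F)
    (h : ∀ i ∈ s, 1 ≤ v (f i - 1)) : 1 ≤ v ((∏ i ∈ s, f i) - 1) := by
  classical
  induction s using Finset.induction with
  | empty => simp [v_zero hv]
  | insert a s' hni ih =>
    have hfa : (1:WithTop ℤ) ≤ v (f a - 1) := h a (Finset.mem_insert_self a s')
    have hfa0 : (0:WithTop ℤ) ≤ v (f a) := by
      have : f a = (f a - 1) + 1 := by ring
      rw [this]
      refine le_trans ?_ (hv.2.2.1 _ _)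
      rw [v_one hv]
      simp only [le_min_iff, le_refl, and_true]
      exact le_trans (by exact_mod_cast (by omega : (0:ℤ) ≤ 1)) hfa
    have hP : (1:WithTop ℤ) ≤ v ((∏ i ∈ s', f i) - 1) :=
      ih (fun i hi => h i (Finset.mem_insert_of_mem hi))
    rw [Finset.prod_insert hni]
    have key : f a * (∏ i ∈ s', f i) - 1 = f a * ((∏ i ∈ s', f i) - 1) + (f a - 1) := by ring
    rw [key]
    refine le_trans ?_ (hv.2.2.1 _ _)
    refine le_min ?_ hfa
    rw [hv.2.1]
    calc (1 : WithTop ℤ) = 0 + 1 := by rw [zero_add]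
    _ ≤ v (f a) + v ((∏ i ∈ s', f i) - 1) := add_le_add hfa0 hP

lemma v_det_sub_one {ν : ℕ} {X : Matrix (Fin ν) (Fin ν) F}
    (hint : ∀ i j, 0 ≤ v (X i j))
    (hdiag : ∀ a, 1 ≤ v (X a a - 1))
    (hup : ∀ a b : Fin ν, a < b → 1 ≤ v (X a b)) :
    1 ≤ v (X.det - 1) := by
  classical
  rw [Matrix.det_apply]
  rw [← Finset.add_sum_erase (Finset.univ : Finset (Equiv.Perm (Fin ν))) (fun σ : Equiv.Perm (Fin ν) => Equiv.Perm.sign σ • ∏ i, X (σ i) i) (Finset.mem_univ (1 : Equiv.Perm (Fin ν)))]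
  have key : (Equiv.Perm.sign (1 : Equiv.Perm (Fin ν)) • ∏ i, X ((1 : Equiv.Perm (Fin ν)) i) i)
      + (∑ σ ∈ (Finset.univ : Finset (Equiv.Perm (Fin ν))).erase 1, Equiv.Perm.sign σ • ∏ i, X (σ i) i) - 1
      = ((∏ i, X i i) - 1) + (∑ σ ∈ (Finset.univ : Finset (Equiv.Perm (Fin ν))).erase 1, Equiv.Perm.sign σ • ∏ i, X (σ i) i) := by
    simp [Equiv.Perm.sign_one]
  rw [key]
  refine le_trans (le_min ?_ ?_) (hv.2.2.1 _ _)
  · exact v_prod_sub_one hv _ _ (fun i _ => hdiag i)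
  · refine v_sum_ge hv _ _ _ (fun σ hσ => ?_)
    have hσ1 : σ ≠ 1 := (Finset.mem_erase.mp hσ).1
    obtain ⟨a, ha⟩ := perm_exists_lt hσ1
    rw [v_intunits_smul hv, ← Finset.mul_prod_erase Finset.univ _ (Finset.mem_univ a), hv.2.1]
    calc (1 : WithTop ℤ) = 1 + 0 := by rw [add_zero]
    _ ≤ v (X (σ a) a) + v (∏ i ∈ Finset.univ.erase a, X (σ i) i) :=
        add_le_add (hup _ _ ha) (v_prod_ge hv _ _ (fun i _ => hint _ _))

omit [Field F] hv in
lemma wtop_add_eq_zero {a b : WithTop ℤ} (ha : 0 ≤ a) (hb : 0 ≤ b) (hab : a + b = 0) :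
    a = 0 := by
  cases a with
  | top => simp at hab
  | coe a =>
    cases b with
    | top => simp at hab
    | coe b =>
      have : a + b = 0 := by exact_mod_cast hab
      have ha' : (0:ℤ) ≤ a := by exact_mod_cast ha
      have hb' : (0:ℤ) ≤ b := by exact_mod_cast hb
      have : a = 0 := by omega
      exact_mod_cast this

lemma GLO_iff {ν : ℕ} (X : Matrix (Fin ν) (Fin ν) F) :
    X ∈ GLO v ν ↔ (∀ i j, 0 ≤ v (X i j)) ∧ v X.det = 0 := by
  constructor
  · rintro ⟨hi, g', hgi, h1, _h2⟩
    refine ⟨hi, ?_⟩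
    have hd : X.det * g'.det = 1 := by rw [← Matrix.det_mul, h1, Matrix.det_one]
    have := hv.2.1 X.det g'.det
    rw [hd, v_one hv] at this
    exact wtop_add_eq_zero (v_det_ge0 hv hi) (v_det_ge0 hv hgi) this.symm
  · rintro ⟨hi, hdet⟩
    have hdne : X.det ≠ 0 := fun h => by rw [h, v_zero hv] at hdet; simp at hdet
    have hadj : ∀ i j, 0 ≤ v (X.adjugate i j) := by
      intro i j
      rw [Matrix.adjugate_apply]
      refine v_det_ge0 hv (fun i' k => ?_)
      rw [Matrix.updateRow_apply]
      split
      · rw [Pi.single_apply]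
        split
        · rw [v_one hv]
        · rw [v_zero hv]; exact le_top
      · exact hi _ _
    have hvinv : v (X.det⁻¹) = 0 := by
      have h1 : X.det⁻¹ * X.det = 1 := inv_mul_cancel₀ hdne
      have := hv.2.1 X.det⁻¹ X.det
      rw [h1, v_one hv, hdet, add_zero] at this
      exact this.symm
    refine ⟨hi, X.det⁻¹ • X.adjugate, ?_, ?_, ?_⟩
    · intro i j
      rw [Matrix.smul_apply, smul_eq_mul, hv.2.1, hvinv, zero_add]
      exact hadj i j
    · rw [mul_smul_comm, Matrix.mul_adjugate, smul_smul, inv_mul_cancel₀ hdne, one_smul]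
    · rw [smul_mul_assoc, Matrix.adjugate_mul, smul_smul, inv_mul_cancel₀ hdne, one_smul]

end Val

section Mx
variable {F : Type*} [Field F] {n : ℕ}

lemma w_apply_left (a b : Fin n) : wMat F n a b = if b = a.rev then 1 else 0 := by
  unfold wMat
  rw [Matrix.of_apply]
  congr 1
  simp only [eq_iff_iff]
  constructor
  · intro h; ext; rw [Fin.val_rev]; omega
  · intro h; subst h; rw [Fin.val_rev]; omega

lemma w_apply_right (a b : Fin n) : wMat F n a b = if a = b.rev then 1 else 0 := by
  rw [w_apply_left]
  congr 1
  simp only [eq_iff_iff]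
  constructor
  · intro h; subst h; exact (Fin.rev_rev a).symm
  · intro h; subst h; exact (Fin.rev_rev b).symm

lemma w_mul_apply {m : Type*} [Fintype m] (A : Matrix (Fin n) m F) (a : Fin n) (b : m) :
    (wMat F n * A) a b = A a.rev b := by
  rw [Matrix.mul_apply]
  rw [Finset.sum_congr rfl (fun k _ => by rw [w_apply_left])]
  simp [ite_mul]

lemma mul_w_apply {m : Type*} [Fintype m] (A : Matrix m (Fin n) F) (a : m) (b : Fin n) :
    (A * wMat F n) a b = A a b.rev := by
  rw [Matrix.mul_apply]
  rw [Finset.sum_congr rfl (fun k _ => by rw [w_apply_right])]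
  simp [mul_ite]

lemma w_mul_w : wMat F n * wMat F n = 1 := by
  ext a b
  rw [w_mul_apply, w_apply_left, Matrix.one_apply]
  congr 1
  simp only [eq_iff_iff]
  constructor
  · intro h; rw [h, Fin.rev_rev]
  · intro h; rw [← h, Fin.rev_rev]

lemma w_mul_u : wMat F n * uCol F n = uCol F n := by
  ext a b
  rw [w_mul_apply]
  rfl

lemma t_mul_mul_apply (ν : ℕ) (s s' : ℤ) (ϖ : F) (X : Matrix (Fin ν) (Fin ν) F) (i j : Fin ν) :
    (tMat ϖ ν s * X * tMat ϖ ν s') i j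
      = ϖ ^ (s * ((ν : ℤ) - 1 - (i : ℕ))) * X i j * ϖ ^ (s' * ((ν : ℤ) - 1 - (j : ℕ))) := by
  unfold tMat
  rw [Matrix.mul_diagonal, Matrix.diagonal_mul]

lemma t_mul_t (ν : ℕ) (s s' : ℤ) (ϖ : F) (hϖ : ϖ ≠ 0) :
    tMat ϖ ν s * tMat ϖ ν s' = tMat ϖ ν (s + s') := by
  unfold tMat
  rw [Matrix.diagonal_mul_diagonal]
  refine congrArg Matrix.diagonal (funext fun i => ?_)
  rw [← zpow_add₀ hϖ]
  congr 1
  ring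

lemma tMat_zero (ν : ℕ) (ϖ : F) : tMat ϖ ν 0 = 1 := by
  unfold tMat
  simp

lemma reindex_mul (A B : Matrix (Fin n ⊕ Fin 1) (Fin n ⊕ Fin 1) F) :
    (Matrix.reindex finSumFinEquiv finSumFinEquiv A) *
      (Matrix.reindex finSumFinEquiv finSumFinEquiv B)
      = Matrix.reindex finSumFinEquiv finSumFinEquiv (A * B) := by
  simp only [Matrix.reindex_apply]
  exact Matrix.submatrix_mul_equiv A B _ _ _

def mInv (F : Type*) [Field F] (n : ℕ) : Matrix (Fin (n + 1)) (Fin (n + 1)) F :=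
  Matrix.reindex finSumFinEquiv finSumFinEquiv
    (Matrix.fromBlocks (wMat F n) (-(uCol F n)) 0 (1 : Matrix (Fin 1) (Fin 1) F))

lemma mInv_mul_m : mInv F n * mMat F n = 1 := by
  unfold mInv mMat
  rw [reindex_mul]
  rw [Matrix.fromBlocks_multiply]
  simp [w_mul_w, w_mul_u]

lemma m_mul_mInv : mMat F n * mInv F n = 1 := by
  unfold mInv mMat
  rw [reindex_mul]
  rw [Matrix.fromBlocks_multiply]
  simp [w_mul_w, Matrix.mul_neg, w_mul_u]

lemma mMat_inv_eq : (mMat F n)⁻¹ = mInv F n :=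
  Matrix.inv_eq_left_inv mInv_mul_m

lemma G_eq (h : Matrix (Fin n) (Fin n) F) :
    (mMat F n)⁻¹ * dg1 h * mMat F n
      = Matrix.reindex finSumFinEquiv finSumFinEquiv
          (Matrix.fromBlocks (wMat F n * h * wMat F n)
            (wMat F n * h * uCol F n - uCol F n) 0 (1 : Matrix (Fin 1) (Fin 1) F)) := by
  rw [mMat_inv_eq]
  unfold mInv dg1 mMat
  rw [reindex_mul, reindex_mul, Matrix.fromBlocks_multiply, Matrix.fromBlocks_multiply]
  congr 2 <;> simp [Matrix.mul_assoc, sub_eq_add_neg]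

lemma esymm_castSucc (a : Fin n) :
    finSumFinEquiv.symm (Fin.castSucc a) = Sum.inl a := by
  rw [Equiv.symm_apply_eq]
  simp only [finSumFinEquiv_apply_left]
  ext
  simp

lemma esymm_last : finSumFinEquiv.symm (Fin.last n) = Sum.inr (0 : Fin 1) := by
  rw [Equiv.symm_apply_eq]
  simp only [finSumFinEquiv_apply_right]
  ext
  simp

section RB
variable (A : Matrix (Fin n) (Fin n) F) (B : Matrix (Fin n) (Fin 1) F)
  (C : Matrix (Fin 1) (Fin n) F) (D : Matrix (Fin 1) (Fin 1) F)

lemma rb_cc (a b : Fin n) :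
    Matrix.reindex finSumFinEquiv finSumFinEquiv (Matrix.fromBlocks A B C D)
      (Fin.castSucc a) (Fin.castSucc b) = A a b := by
  rw [Matrix.reindex_apply, Matrix.submatrix_apply, esymm_castSucc, esymm_castSucc]
  rfl

lemma rb_cl (a : Fin n) :
    Matrix.reindex finSumFinEquiv finSumFinEquiv (Matrix.fromBlocks A B C D)
      (Fin.castSucc a) (Fin.last n) = B a 0 := by
  rw [Matrix.reindex_apply, Matrix.submatrix_apply, esymm_castSucc, esymm_last]
  rfl

lemma rb_lc (b : Fin n) :
    Matrix.reindex finSumFinEquiv finSumFinEquiv (Matrix.fromBlocks A B C D)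
      (Fin.last n) (Fin.castSucc b) = C 0 b := by
  rw [Matrix.reindex_apply, Matrix.submatrix_apply, esymm_last, esymm_castSucc]
  rfl

lemma rb_ll :
    Matrix.reindex finSumFinEquiv finSumFinEquiv (Matrix.fromBlocks A B C D)
      (Fin.last n) (Fin.last n) = D 0 0 := by
  rw [Matrix.reindex_apply, Matrix.submatrix_apply, esymm_last]
  rfl

end RB

lemma whw_apply (h : Matrix (Fin n) (Fin n) F) (a b : Fin n) :
    (wMat F n * h * wMat F n) a b = h a.rev b.rev := by
  rw [mul_w_apply, w_mul_apply]

lemma whu_apply (h : Matrix (Fin n) (Fin n) F) (a : Fin n) :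
    (wMat F n * h * uCol F n - uCol F n) a 0 = (∑ b, h a.rev b) - 1 := by
  rw [Matrix.sub_apply, Matrix.mul_apply]
  have h1 : ∀ k, (wMat F n * h) a k * uCol F n k 0 = h a.rev k := fun k => by
    rw [w_mul_apply]; simp [uCol]
  rw [Finset.sum_congr rfl (fun k _ => h1 k)]
  simp [uCol]

lemma det_G (h : Matrix (Fin n) (Fin n) F) :
    ((mMat F n)⁻¹ * dg1 h * mMat F n).det = h.det := by
  rw [G_eq, Matrix.reindex_apply, Matrix.det_submatrix_equiv_self,
    Matrix.det_fromBlocks_zero₂₁, Matrix.det_one, mul_one, Matrix.det_mul, Matrix.det_mul]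
  have hw : (wMat F n).det * (wMat F n).det = 1 := by
    rw [← Matrix.det_mul, w_mul_w, Matrix.det_one]
  calc (wMat F n).det * h.det * (wMat F n).det
      = ((wMat F n).det * (wMat F n).det) * h.det := by ring
    _ = h.det := by rw [hw, one_mul]

end Mx

section Glue
variable {F : Type*} [Field F] {v : F → WithTop ℤ} {ϖ : F}

omit [Field F] in
lemma rev_coe {n : ℕ} (a : Fin n) :
    ((a.rev : ℕ) : ℤ) = (n : ℤ) - 1 - ((a : ℕ) : ℤ) := by
  have := Fin.val_rev a
  omega

lemma wt_shift (c k : ℤ) (t : WithTop ℤ) :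
    ((c : ℤ) : WithTop ℤ) ≤ (k : WithTop ℤ) + t ↔ ((c - k : ℤ) : WithTop ℤ) ≤ t := by
  cases t with
  | top => simp
  | coe a =>
    rw [← WithTop.coe_add, WithTop.coe_le_coe, WithTop.coe_le_coe]
    omega

lemma wt_shift0 (k : ℤ) (t : WithTop ℤ) :
    0 ≤ (k : WithTop ℤ) + t ↔ ((-k : ℤ) : WithTop ℤ) ≤ t := by
  rw [← WithTop.coe_zero, wt_shift]
  norm_num

lemma v_tXt (hv : IsDVal v ϖ) {ν : ℕ} (s s' : ℤ) (X : Matrix (Fin ν) (Fin ν) F) (i j : Fin ν) :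
    v ((tMat ϖ ν s * X * tMat ϖ ν s') i j)
      = ((s * ((ν : ℤ) - 1 - ((i : ℕ) : ℤ)) + s' * ((ν : ℤ) - 1 - ((j : ℕ) : ℤ)) : ℤ) : WithTop ℤ)
        + v (X i j) := by
  rw [t_mul_mul_apply, hv.2.1, hv.2.1, v_zpow hv, v_zpow hv, add_right_comm, ← WithTop.coe_add]

variable (hv : IsDVal v ϖ)
include hv

lemma sd8_fwd {n : ℕ} {r : ℤ} (hr : 1 ≤ r) (h : Matrix (Fin n) (Fin n) F)
    (hC : h ∈ KHexplicit v ϖ n r) :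
    h ∈ GLO v n ∧ (∀ i j, 0 ≤ v ((tMat ϖ n (-r) * h * tMat ϖ n r) i j)) ∧
    (mMat F n)⁻¹ * dg1 h * mMat F n ∈ Kpar v ϖ (n + 1) (-r) ∧
    ∀ i, ((|(-r)| : ℤ) : WithTop ℤ) ≤ v (((mMat F n)⁻¹ * dg1 h * mMat F n) i i - 1) := by
  obtain ⟨hC1, hC2⟩ := hC
  have hϖ : ϖ ≠ 0 := v_pi_ne hv
  have hr0 : (0 : ℤ) ≤ r := by omega
  have hInt : ∀ a b, 0 ≤ v (h a b) := by
    intro a b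
    refine le_trans ?_ (hC1 a b)
    rw [← WithTop.coe_zero]
    exact WithTop.coe_le_coe.mpr (mul_nonneg hr0 (abs_nonneg _))
  have hC1a : ∀ a b : Fin n,
      ((r * (((a : ℕ) : ℤ) - ((b : ℕ) : ℤ)) : ℤ) : WithTop ℤ) ≤ v (h a b) := by
    intro a b
    refine le_trans (WithTop.coe_le_coe.mpr ?_) (hC1 a b)
    have := le_abs_self (((a : ℕ) : ℤ) - ((b : ℕ) : ℤ))
    nlinarith
  have hOffr : ∀ a b : Fin n, a ≠ b → ((r : ℤ) : WithTop ℤ) ≤ v (h a b) := by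
    intro a b hab
    refine le_trans (WithTop.coe_le_coe.mpr ?_) (hC1 a b)
    have h1 : (1 : ℤ) ≤ |((a : ℕ) : ℤ) - ((b : ℕ) : ℤ)| := by
      have h2 : ((a : ℕ) : ℤ) ≠ ((b : ℕ) : ℤ) := by
        intro hh
        exact hab (Fin.ext (by exact_mod_cast hh))
      have := abs_pos.mpr (sub_ne_zero.mpr h2)
      omega
    nlinarith
  have hDiag : ∀ a, ((r : ℤ) : WithTop ℤ) ≤ v (h a a - 1) := by
    intro a
    have hsum := hC2 a
    have hrest : ((r : ℤ) : WithTop ℤ) ≤ v (∑ b ∈ Finset.univ.erase a, h a b) :=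
      v_sum_ge hv _ _ _ (fun b hb => hOffr a b (Ne.symm (Finset.mem_erase.mp hb).1))
    have hkey : h a a - 1 = ((∑ b, h a b) - 1) - (∑ b ∈ Finset.univ.erase a, h a b) := by
      rw [← Finset.add_sum_erase Finset.univ (h a) (Finset.mem_univ a)]
      ring
    rw [hkey]
    refine le_trans (le_min ?_ hrest) (v_sub_ge hv _ _)
    refine le_trans (WithTop.coe_le_coe.mpr ?_) hsum
    have ha0 : (0 : ℤ) ≤ ((a : ℕ) : ℤ) := Int.ofNat_nonneg _
    nlinarith
  have hone : (1 : WithTop ℤ) = ((1 : ℤ) : WithTop ℤ) := by norm_cast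
  have hDiag1 : ∀ a, (1 : WithTop ℤ) ≤ v (h a a - 1) := by
    intro a
    rw [hone]
    exact le_trans (WithTop.coe_le_coe.mpr hr) (hDiag a)
  have hUp1 : ∀ a b : Fin n, a < b → (1 : WithTop ℤ) ≤ v (h a b) := by
    intro a b hab
    rw [hone]
    exact le_trans (WithTop.coe_le_coe.mpr hr) (hOffr a b (ne_of_lt hab))
  have hdet1 := v_det_sub_one hv hInt hDiag1 hUp1
  have hdet0 : v h.det = 0 := by
    have h0 := v_one_add hv hdet1
    have e : (1 : F) + (h.det - 1) = h.det := by ring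
    rwa [e] at h0
  have hGLO : h ∈ GLO v n := (GLO_iff hv h).mpr ⟨hInt, hdet0⟩
  have hTconj : ∀ i j, 0 ≤ v ((tMat ϖ n (-r) * h * tMat ϖ n r) i j) := by
    intro i j
    rw [v_tXt hv, wt_shift0]
    refine le_trans (WithTop.coe_le_coe.mpr ?_) (hC1 i j)
    rcases abs_cases (((i : ℕ) : ℤ) - ((j : ℕ) : ℤ)) with ⟨he, hc⟩ | ⟨he, hc⟩ <;>
      rw [he] <;> nlinarith
  have hGint : ∀ i j : Fin (n + 1),
      0 ≤ v ((Matrix.reindex finSumFinEquiv finSumFinEquiv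
        (Matrix.fromBlocks (wMat F n * h * wMat F n)
          (wMat F n * h * uCol F n - uCol F n) 0 (1 : Matrix (Fin 1) (Fin 1) F))) i j) := by
    intro i j
    induction i using Fin.lastCases with
    | last =>
      induction j using Fin.lastCases with
      | last => rw [rb_ll, Matrix.one_apply_eq, v_one hv]
      | cast b => rw [rb_lc, Matrix.zero_apply, v_zero hv]; exact le_top
    | cast a =>
      induction j using Fin.lastCases with
      | last =>
        rw [rb_cl, whu_apply]
        refine le_trans ?_ (hC2 a.rev)
        rw [← WithTop.coe_zero]
        refine WithTop.coe_le_coe.mpr ?_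
        have ha0 : (0 : ℤ) ≤ ((a.rev : ℕ) : ℤ) := Int.ofNat_nonneg _
        nlinarith
      | cast b => rw [rb_cc, whw_apply]; exact hInt _ _
  have hGdet : (Matrix.reindex finSumFinEquiv finSumFinEquiv
      (Matrix.fromBlocks (wMat F n * h * wMat F n)
        (wMat F n * h * uCol F n - uCol F n) 0 (1 : Matrix (Fin 1) (Fin 1) F))).det = h.det := by
    rw [← G_eq, det_G]
  have hGGLO : (Matrix.reindex finSumFinEquiv finSumFinEquiv
      (Matrix.fromBlocks (wMat F n * h * wMat F n)
        (wMat F n * h * uCol F n - uCol F n) 0 (1 : Matrix (Fin 1) (Fin 1) F)))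
        ∈ GLO v (n + 1) :=
    (GLO_iff hv _).mpr ⟨hGint, by rw [hGdet, hdet0]⟩
  have hCjint : ∀ i j : Fin (n + 1),
      0 ≤ v ((tMat ϖ (n + 1) (-r) * (Matrix.reindex finSumFinEquiv finSumFinEquiv
        (Matrix.fromBlocks (wMat F n * h * wMat F n)
          (wMat F n * h * uCol F n - uCol F n) 0 (1 : Matrix (Fin 1) (Fin 1) F)))
            * tMat ϖ (n + 1) r) i j) := by
    intro i j
    rw [v_tXt hv, wt_shift0]
    induction i using Fin.lastCases with
    | last =>
      induction j using Fin.lastCases with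
      | last =>
        rw [rb_ll, Matrix.one_apply_eq, v_one hv, ← WithTop.coe_zero]
        refine WithTop.coe_le_coe.mpr ?_
        simp only [Fin.val_last]
        push_cast
        linarith
      | cast b => rw [rb_lc, Matrix.zero_apply, v_zero hv]; exact le_top
    | cast a =>
      induction j using Fin.lastCases with
      | last =>
        rw [rb_cl, whu_apply]
        refine le_trans (WithTop.coe_le_coe.mpr ?_) (hC2 a.rev)
        simp only [Fin.coe_castSucc, Fin.val_last]
        rw [rev_coe]
        push_cast
        linarith
      | cast b =>
        rw [rb_cc, whw_apply]
        refine le_trans (WithTop.coe_le_coe.mpr ?_) (hC1a a.rev b.rev)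
        simp only [Fin.coe_castSucc]
        rw [rev_coe, rev_coe]
        push_cast
        linarith
  have hCjdet : v ((tMat ϖ (n + 1) (-r) * (Matrix.reindex finSumFinEquiv finSumFinEquiv
      (Matrix.fromBlocks (wMat F n * h * wMat F n)
        (wMat F n * h * uCol F n - uCol F n) 0 (1 : Matrix (Fin 1) (Fin 1) F)))
          * tMat ϖ (n + 1) r).det) = 0 := by
    rw [Matrix.det_mul, Matrix.det_mul]
    have h1 : (tMat ϖ (n + 1) (-r)).det * (tMat ϖ (n + 1) r).det = 1 := by
      rw [← Matrix.det_mul, t_mul_t _ _ _ _ hϖ, (by ring : -r + r = 0), tMat_zero,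
        Matrix.det_one]
    have e : (tMat ϖ (n + 1) (-r)).det * (Matrix.reindex finSumFinEquiv finSumFinEquiv
        (Matrix.fromBlocks (wMat F n * h * wMat F n)
          (wMat F n * h * uCol F n - uCol F n) 0 (1 : Matrix (Fin 1) (Fin 1) F))).det
            * (tMat ϖ (n + 1) r).det = h.det := by
      rw [hGdet]
      calc (tMat ϖ (n + 1) (-r)).det * h.det * (tMat ϖ (n + 1) r).det
          = ((tMat ϖ (n + 1) (-r)).det * (tMat ϖ (n + 1) r).det) * h.det := by ring
        _ = h.det := by rw [h1, one_mul]
    rw [e, hdet0]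
  refine ⟨hGLO, hTconj, ?_, ?_⟩
  · rw [G_eq]
    refine ⟨hGGLO, ?_⟩
    rw [neg_neg]
    exact (GLO_iff hv _).mpr ⟨hCjint, hCjdet⟩
  · intro i
    rw [G_eq]
    induction i using Fin.lastCases with
    | last =>
      rw [rb_ll, Matrix.one_apply_eq, sub_self, v_zero hv]
      exact le_top
    | cast a =>
      rw [rb_cc, whw_apply]
      refine le_trans (WithTop.coe_le_coe.mpr ?_) (hDiag a.rev)
      rw [abs_neg, abs_of_nonneg hr0]

lemma sd8_bwd {n : ℕ} {r : ℤ} (hr : 1 ≤ r) (h : Matrix (Fin n) (Fin n) F)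
    (h1 : h ∈ GLO v n)
    (h2 : ∀ i j, 0 ≤ v ((tMat ϖ n (-r) * h * tMat ϖ n r) i j))
    (h3 : (mMat F n)⁻¹ * dg1 h * mMat F n ∈ Kpar v ϖ (n + 1) (-r)) :
    h ∈ KHexplicit v ϖ n r := by
  obtain ⟨-, hconj⟩ := h3
  rw [G_eq, neg_neg] at hconj
  obtain ⟨hconjInt, -⟩ := hconj
  constructor
  · intro a b
    rcases abs_cases (((a : ℕ) : ℤ) - ((b : ℕ) : ℤ)) with ⟨he, hc⟩ | ⟨he, hc⟩
    · have H := hconjInt (Fin.castSucc a.rev) (Fin.castSucc b.rev)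
      rw [v_tXt hv, wt_shift0, rb_cc, whw_apply, Fin.rev_rev, Fin.rev_rev] at H
      refine le_trans (WithTop.coe_le_coe.mpr ?_) H
      rw [he]
      simp only [Fin.coe_castSucc]
      rw [rev_coe, rev_coe]
      push_cast
      linarith
    · have H := h2 a b
      rw [v_tXt hv, wt_shift0] at H
      refine le_trans (WithTop.coe_le_coe.mpr ?_) H
      rw [he]
      push_cast
      linarith
  · intro a
    have H := hconjInt (Fin.castSucc a.rev) (Fin.last n)
    rw [v_tXt hv, wt_shift0, rb_cl, whu_apply, Fin.rev_rev] at H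
    refine le_trans (WithTop.coe_le_coe.mpr ?_) H
    simp only [Fin.coe_castSucc, Fin.val_last]
    rw [rev_coe]
    push_cast
    linarith

end Glue

/-- Remark 5.8: equivalent descriptions of `K_H^{(r)}`. -/
theorem statement8 {F : Type*} [Field F] (v : F → WithTop ℤ) (ϖ : F) (hval : IsDVal v ϖ)
    (n : ℕ) (hn : 1 ≤ n) (r : ℤ) (hr : 1 ≤ r) :
    (∀ h : Matrix (Fin n) (Fin n) F,
      ((h ∈ GLO v n ∧ (∀ i j, 0 ≤ v ((tMat ϖ n (-r) * h * tMat ϖ n r) i j)) ∧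
          (mMat F n)⁻¹ * dg1 h * mMat F n ∈ Kpar v ϖ (n + 1) (-r)) ↔
        h ∈ KHexplicit v ϖ n r) ∧
      ((h ∈ GLO v n ∧ (∀ i j, 0 ≤ v ((tMat ϖ n (-r) * h * tMat ϖ n r) i j)) ∧
          (mMat F n)⁻¹ * dg1 h * mMat F n ∈ KparSq v ϖ (n + 1) (-r)) ↔
        h ∈ KHexplicit v ϖ n r)) ∧
    KH v ϖ n r = KHexplicit v ϖ n r := by
  have main1 : ∀ h : Matrix (Fin n) (Fin n) F,
      (h ∈ GLO v n ∧ (∀ i j, 0 ≤ v ((tMat ϖ n (-r) * h * tMat ϖ n r) i j)) ∧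
        (mMat F n)⁻¹ * dg1 h * mMat F n ∈ Kpar v ϖ (n + 1) (-r)) ↔
      h ∈ KHexplicit v ϖ n r := by
    intro h
    constructor
    · rintro ⟨h1, h2, h3⟩
      exact sd8_bwd hval hr h h1 h2 h3
    · intro hC
      obtain ⟨a1, a2, a3, a4⟩ := sd8_fwd hval hr h hC
      exact ⟨a1, a2, a3⟩
  have main2 : ∀ h : Matrix (Fin n) (Fin n) F,
      (h ∈ GLO v n ∧ (∀ i j, 0 ≤ v ((tMat ϖ n (-r) * h * tMat ϖ n r) i j)) ∧
        (mMat F n)⁻¹ * dg1 h * mMat F n ∈ KparSq v ϖ (n + 1) (-r)) ↔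
      h ∈ KHexplicit v ϖ n r := by
    intro h
    constructor
    · rintro ⟨h1, h2, h3⟩
      exact sd8_bwd hval hr h h1 h2 h3.1
    · intro hC
      obtain ⟨a1, a2, a3, a4⟩ := sd8_fwd hval hr h hC
      exact ⟨a1, a2, a3, a4⟩
  refine ⟨fun h => ⟨main1 h, main2 h⟩, Set.ext fun h => ?_⟩
  exact main1 h
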